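/- For any d×d positive semidefinite matrices P and Q, the Powers–Størmer inequality holds: ‖P − Q‖_tr ≥ ‖√P − √Q‖_HS², where √P and √Q are the positive semidefinite square roots of P and Q. -/

import Mathlib

open Matrix
open scoped ComplexOrder

/-- The positive semidefinite square root of a positive semidefinite matrix
(the definition removed from Mathlib, restated verbatim). -/
noncomputable def Matrix.PosSemidef.sqrt {n : Type*} [Fintype n] [DecidableEq n] {𝕜 : Type*}
    [RCLike 𝕜] {A : Matrix n n 𝕜} (hA : A.PosSemidef) : Matrix n n 𝕜 :=
  hA.1.eigenvectorUnitary.1 * diagonal ((↑) ∘ (√·) ∘ hA.1.eigenvalues) *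
  (star hA.1.eigenvectorUnitary : Matrix n n 𝕜)

open scoped MatrixOrder in
lemma Matrix.PosSemidef.sqrt_eq_cfcSqrt {d : ℕ} {A : Matrix (Fin d) (Fin d) ℂ}
    (hA : A.PosSemidef) : hA.sqrt = CFC.sqrt A := by
  have h0 : 0 ≤ A := hA.nonneg
  rw [CFC.sqrt_eq_cfc, cfc_nnreal_eq_real _ A, hA.1.cfc_eq, Matrix.PosSemidef.sqrt]
  simp only [IsHermitian.cfc, Unitary.conjStarAlgAut_apply]
  congr 3
  funext i
  simp only [Function.comp_apply, Real.coe_sqrt, Real.coe_toNNReal']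
  rw [max_eq_left (hA.eigenvalues_nonneg i)]

open scoped MatrixOrder in
lemma Matrix.PosSemidef.posSemidef_sqrt {d : ℕ} {A : Matrix (Fin d) (Fin d) ℂ}
    (hA : A.PosSemidef) : hA.sqrt.PosSemidef := by
  rw [hA.sqrt_eq_cfcSqrt]
  exact (CFC.sqrt_nonneg A).posSemidef

open scoped MatrixOrder in
lemma Matrix.PosSemidef.sqrt_mul_self {d : ℕ} {A : Matrix (Fin d) (Fin d) ℂ}
    (hA : A.PosSemidef) : hA.sqrt * hA.sqrt = A := by
  have h0 : 0 ≤ A := hA.nonneg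
  rw [hA.sqrt_eq_cfcSqrt]
  exact CFC.sqrt_mul_sqrt_self A

open scoped MatrixOrder in
lemma Matrix.PosSemidef.eq_sqrt_of_sq_eq {d : ℕ} {A B : Matrix (Fin d) (Fin d) ℂ}
    (hA : A.PosSemidef) (hB : B.PosSemidef) (hAB : A ^ 2 = B) : A = hB.sqrt := by
  have h0 : 0 ≤ A := hA.nonneg
  rw [hB.sqrt_eq_cfcSqrt]
  exact (CFC.sqrt_unique (by rw [← sq, hAB]) h0).symm

lemma PS_diag_re_nonneg {d : ℕ} {M : Matrix (Fin d) (Fin d) ℂ} (hM : M.PosSemidef)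
    (i : Fin d) : 0 ≤ (M i i).re := by
  have h := hM.re_dotProduct_nonneg (Pi.single i 1)
  have e : star (Pi.single i 1 : Fin d → ℂ) ⬝ᵥ M *ᵥ Pi.single i 1 = M i i := by
    simp [dotProduct, mulVec, Pi.single_apply, Finset.sum_ite_eq]
  rw [e] at h; exact h

lemma PS_conj_mul_conj {d : ℕ} (U : Matrix (Fin d) (Fin d) ℂ) (hU : U * star U = 1)
    (X Y : Matrix (Fin d) (Fin d) ℂ) :
    (star U * X * U) * (star U * Y * U) = star U * (X * Y) * U := by
  simp only [mul_assoc]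
  rw [← mul_assoc U (star U) (Y * U), hU, one_mul]

lemma PS_conj_mul_conj' {d : ℕ} (U : Matrix (Fin d) (Fin d) ℂ) (hU : star U * U = 1)
    (X Y : Matrix (Fin d) (Fin d) ℂ) :
    (U * X * star U) * (U * Y * star U) = U * (X * Y) * star U := by
  simp only [mul_assoc]
  rw [← mul_assoc (star U) U (Y * star U), hU, one_mul]

lemma PS_ofReal_re (x : ℝ) : (RCLike.ofReal x : ℂ).re = x := rfl

lemma PS_trace_conj {d : ℕ} (U : Matrix (Fin d) (Fin d) ℂ) (hU : U * star U = 1)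
    (M : Matrix (Fin d) (Fin d) ℂ) : (star U * M * U).trace = M.trace := by
  rw [trace_mul_cycle, hU, one_mul]

/-- The trace norm of a matrix `A`: `‖A‖_tr = Tr √(AᴴA)`. -/
noncomputable def traceNorm {d : ℕ} (A : Matrix (Fin d) (Fin d) ℂ) : ℝ :=
  ((Matrix.posSemidef_conjTranspose_mul_self A).sqrt.trace).re

/-- The Hilbert–Schmidt norm of a matrix `A`: `‖A‖_HS = √(Tr(AᴴA))`. -/
noncomputable def hsNorm {d : ℕ} (A : Matrix (Fin d) (Fin d) ℂ) : ℝ :=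
  Real.sqrt (((Aᴴ * A).trace).re)

/-- The Powers–Størmer inequality: for positive semidefinite matrices `P`, `Q`,
`‖P − Q‖_tr ≥ ‖√P − √Q‖_HS²`. -/
theorem powers_stormer {d : ℕ} (P Q : Matrix (Fin d) (Fin d) ℂ)
    (hP : P.PosSemidef) (hQ : Q.PosSemidef) :
    traceNorm (P - Q) ≥ hsNorm (hP.sqrt - hQ.sqrt) ^ 2 := by
  classical
  have hsPpsd := hP.posSemidef_sqrt
  have hsQpsd := hQ.posSemidef_sqrt
  set A : Matrix (Fin d) (Fin d) ℂ := hP.sqrt - hQ.sqrt with hAdef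
  set B : Matrix (Fin d) (Fin d) ℂ := hP.sqrt + hQ.sqrt with hBdef
  have hA : A.IsHermitian := hsPpsd.1.sub hsQpsd.1
  have hBpsd : B.PosSemidef := hsPpsd.add hsQpsd
  have hR : (P - Q).IsHermitian := hP.1.sub hQ.1
  set U : Matrix (Fin d) (Fin d) ℂ := (hA.eigenvectorUnitary : Matrix (Fin d) (Fin d) ℂ) with hUdef
  set V : Matrix (Fin d) (Fin d) ℂ := (hR.eigenvectorUnitary : Matrix (Fin d) (Fin d) ℂ) with hVdef
  set lam : Fin d → ℝ := hA.eigenvalues with hlam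
  set mu : Fin d → ℝ := hR.eigenvalues with hmu
  have hUU : star U * U = 1 := Unitary.coe_star_mul_self _
  have hUU' : U * star U = 1 := Matrix.mem_unitaryGroup_iff.mp hA.eigenvectorUnitary.2
  have hVV : star V * V = 1 := Unitary.coe_star_mul_self _
  have hVV' : V * star V = 1 := Matrix.mem_unitaryGroup_iff.mp hR.eigenvectorUnitary.2
  have specA : A = U * diagonal (Complex.ofReal ∘ lam) * star U := hA.spectral_theorem
  have specR : P - Q = V * diagonal (Complex.ofReal ∘ mu) * star V := hR.spectral_theorem
  have hAdiag : star U * A * U = diagonal (Complex.ofReal ∘ lam) :=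
    (Unitary.conjStarAlgAut_star_apply _ _).symm.trans hA.conjStarAlgAut_star_eigenvectorUnitary
  -- Step 1: traceNorm (P - Q) = ∑ j, |mu j|
  set K : Matrix (Fin d) (Fin d) ℂ :=
    V * diagonal (Complex.ofReal ∘ fun j => |mu j|) * star V with hKdef
  have hKpsd : K.PosSemidef := by
    have hdiag : (diagonal (Complex.ofReal ∘ fun j => |mu j| : Fin d → ℂ)).PosSemidef :=
      posSemidef_diagonal_iff.mpr fun i => by
        simpa using RCLike.ofReal_nonneg.mpr (abs_nonneg (mu i))
    have := hdiag.mul_mul_conjTranspose_same V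
    rw [← Matrix.star_eq_conjTranspose] at this
    exact this
  have hKsq : K ^ 2 = (P - Q)ᴴ * (P - Q) := by
    rw [hR.eq, pow_two, hKdef, PS_conj_mul_conj' V hVV, specR, PS_conj_mul_conj' V hVV,
      diagonal_mul_diagonal, diagonal_mul_diagonal]
    congr 1
    funext i
    simp [← Complex.ofReal_mul, ← Complex.ofReal_pow, ← sq, sq_abs]
  have hKeq : K = (Matrix.posSemidef_conjTranspose_mul_self (P - Q)).sqrt :=
    hKpsd.eq_sqrt_of_sq_eq _ hKsq
  have traceNormR : traceNorm (P - Q) = ∑ j, |mu j| := by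
    rw [traceNorm, ← hKeq, hKdef, trace_mul_cycle, hVV, one_mul, trace_diagonal]
    rw [Complex.re_sum]
    simp
  -- Step 2: hsNorm A ^ 2 = ∑ i, lam i ^ 2
  have trAA : ((Aᴴ * A).trace).re = ∑ i, lam i ^ 2 := by
    rw [hA.eq, specA, PS_conj_mul_conj' U hUU, diagonal_mul_diagonal, trace_mul_cycle, hUU, one_mul,
      trace_diagonal, Complex.re_sum]
    congr 1; funext i
    simp [← Complex.ofReal_mul, ← Complex.ofReal_pow, ← sq, PS_ofReal_re]
  have hsA : hsNorm A ^ 2 = ∑ i, lam i ^ 2 := by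
    rw [hsNorm, Real.sq_sqrt, trAA]
    rw [trAA]
    positivity
  -- Step 3: B' diagonal entries dominate |lam|
  set B' : Matrix (Fin d) (Fin d) ℂ := star U * B * U with hB'def
  have hBAp : (B + A).PosSemidef := by
    have e : B + A = hP.sqrt + hP.sqrt := by rw [hAdef, hBdef]; abel
    rw [e]; exact hP.posSemidef_sqrt.add hP.posSemidef_sqrt
  have hBAm : (B - A).PosSemidef := by
    have e : B - A = hQ.sqrt + hQ.sqrt := by rw [hAdef, hBdef]; abel
    rw [e]; exact hQ.posSemidef_sqrt.add hQ.posSemidef_sqrt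
  have conjpsd : ∀ {M : Matrix (Fin d) (Fin d) ℂ}, M.PosSemidef → (star U * M * U).PosSemidef := by
    intro M hM
    have := hM.mul_mul_conjTranspose_same (star U)
    rw [← Matrix.star_eq_conjTranspose, star_star] at this
    exact this
  have key1 : ∀ i, |lam i| ≤ (B' i i).re := by
    intro i
    have e1 : star U * (B + A) * U = B' + diagonal (Complex.ofReal ∘ lam) := by
      rw [mul_add, add_mul, hAdiag, hB'def]
    have e2 : star U * (B - A) * U = B' - diagonal (Complex.ofReal ∘ lam) := by
      rw [mul_sub, sub_mul, hAdiag, hB'def]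
    have h1 := PS_diag_re_nonneg (conjpsd hBAp) i
    have h2 := PS_diag_re_nonneg (conjpsd hBAm) i
    rw [e1] at h1; rw [e2] at h2
    simp only [Matrix.add_apply, Matrix.sub_apply, diagonal_apply_eq, Complex.add_re,
      Complex.sub_re, Function.comp_apply, Complex.ofReal_re] at h1 h2
    rw [abs_le]; constructor <;> linarith
  -- Step 4: the sign matrix and the trace identity
  set sg : Fin d → ℝ := fun i => if 0 ≤ lam i then (1 : ℝ) else (-1 : ℝ) with hsg
  set s : Fin d → ℂ := fun i => (sg i : ℂ) with hs
  set S : Matrix (Fin d) (Fin d) ℂ := U * diagonal s * star U with hSdef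
  have hlams : ∀ i, (lam i : ℂ) * s i = ((|lam i| : ℝ) : ℂ) := by
    intro i
    by_cases h : 0 ≤ lam i
    · simp only [hs, hsg, if_pos h]
      rw [abs_of_nonneg h]; simp
    · push_neg at h
      simp only [hs, hsg, if_neg (not_le.mpr h)]
      rw [abs_of_neg h]; push_cast; ring
  have keyid : A * B + B * A = (P - Q) + (P - Q) := by
    rw [hAdef, hBdef]
    simp only [sub_mul, mul_add, add_mul, mul_sub, hP.sqrt_mul_self, hQ.sqrt_mul_self]
    abel
  have trace_id : ((P - Q) * S).trace = ∑ i, ((|lam i| : ℝ) : ℂ) * B' i i := by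
    have h2 : ((P - Q) * S).trace + ((P - Q) * S).trace
        = ∑ i, (((|lam i| : ℝ) : ℂ) * B' i i + ((|lam i| : ℝ) : ℂ) * B' i i) := by
      calc ((P - Q) * S).trace + ((P - Q) * S).trace
          = (((P - Q) + (P - Q)) * S).trace := by rw [add_mul, trace_add]
        _ = ((A * B) * S).trace + ((B * A) * S).trace := by
            rw [← keyid, add_mul, trace_add]
        _ = (star U * ((A * B) * S) * U).trace + (star U * ((B * A) * S) * U).trace := by
            rw [PS_trace_conj U hUU', PS_trace_conj U hUU']
        _ = ((diagonal (Complex.ofReal ∘ lam) * B') * diagonal s).trace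
            + ((B' * diagonal (Complex.ofReal ∘ lam)) * diagonal s).trace := by
            have hSU : star U * S * U = diagonal s := by
              rw [hSdef]
              calc star U * (U * diagonal s * star U) * U
                  = (star U * U) * diagonal s * (star U * U) := by
                    simp only [mul_assoc]
                _ = diagonal s := by rw [hUU, one_mul, mul_one]
            have e1 : star U * ((A * B) * S) * U
                = (diagonal (Complex.ofReal ∘ lam) * B') * diagonal s := by
              rw [← PS_conj_mul_conj U hUU' (A * B) S, ← PS_conj_mul_conj U hUU' A B,
                hAdiag, hSU, hB'def]
            have e2 : star U * ((B * A) * S) * U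
                = (B' * diagonal (Complex.ofReal ∘ lam)) * diagonal s := by
              rw [← PS_conj_mul_conj U hUU' (B * A) S, ← PS_conj_mul_conj U hUU' B A,
                hAdiag, hSU, hB'def]
            rw [e1, e2]
        _ = ∑ i, (((|lam i| : ℝ) : ℂ) * B' i i + ((|lam i| : ℝ) : ℂ) * B' i i) := by
            rw [Matrix.trace, Matrix.trace, ← Finset.sum_add_distrib]
            congr 1; funext i
            simp only [Matrix.diag_apply, Matrix.mul_diagonal, Matrix.diagonal_mul,
              Function.comp_apply]
            rw [← hlams i]
            ring
    have h2' : (2 : ℂ) * ((P - Q) * S).trace = 2 * ∑ i, ((|lam i| : ℝ) : ℂ) * B' i i := by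
      rw [two_mul, two_mul, h2, Finset.sum_add_distrib]
    exact mul_left_cancel₀ two_ne_zero h2'
  have trace_re : (((P - Q) * S).trace).re = ∑ i, |lam i| * (B' i i).re := by
    rw [trace_id, Complex.re_sum]
    congr 1; funext i
    exact Complex.re_ofReal_mul _ _
  -- Step 5: lower bound
  have lower : ∑ i, lam i ^ 2 ≤ (((P - Q) * S).trace).re := by
    rw [trace_re]
    apply Finset.sum_le_sum
    intro i _
    calc lam i ^ 2 = |lam i| * |lam i| := by rw [abs_mul_abs_self, sq]
      _ ≤ |lam i| * (B' i i).re := mul_le_mul_of_nonneg_left (key1 i) (abs_nonneg _)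
  -- Step 6: upper bound
  set W : Matrix (Fin d) (Fin d) ℂ := star U * V with hWdef
  have hWW : star W * W = 1 := by
    rw [hWdef, StarMul.star_mul, star_star]
    calc star V * U * (star U * V) = star V * (U * star U) * V := by simp only [mul_assoc]
      _ = 1 := by rw [hUU', mul_one, hVV]
  set T : Matrix (Fin d) (Fin d) ℂ := star V * S * V with hTdef
  have hTW : T = star W * diagonal s * W := by
    rw [hTdef, hWdef, StarMul.star_mul, star_star, hSdef]
    simp only [mul_assoc]
  have hWnorm : ∀ j, ∑ k, Complex.normSq (W k j) = 1 := by
    intro j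
    have h := congrFun (congrFun hWW j) j
    rw [Matrix.mul_apply] at h
    have : ∀ k, (star W) j k * W k j = (Complex.normSq (W k j) : ℂ) := by
      intro k
      rw [Matrix.star_apply, RCLike.star_def, ← Complex.normSq_eq_conj_mul_self]
    rw [Finset.sum_congr rfl fun k _ => this k] at h
    have h' : ((∑ k, Complex.normSq (W k j) : ℝ) : ℂ) = 1 := by push_cast; rw [h]; simp
    exact_mod_cast h'
  have hTjj : ∀ j, |(T j j).re| ≤ 1 := by
    intro j
    have e : (T j j).re = ∑ k, sg k * Complex.normSq (W k j) := by
      rw [hTW, Matrix.mul_apply]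
      rw [Complex.re_sum]
      congr 1; funext k
      rw [Matrix.mul_diagonal, Matrix.star_apply, hs]
      have : (starRingEnd ℂ) (W k j) * (sg k : ℂ) * W k j
          = (sg k : ℂ) * ((starRingEnd ℂ) (W k j) * W k j) := by ring
      rw [show star (W k j) = (starRingEnd ℂ) (W k j) from rfl, this,
        ← Complex.normSq_eq_conj_mul_self, ← Complex.ofReal_mul]
      simp
    rw [e]
    calc |∑ k, sg k * Complex.normSq (W k j)| ≤ ∑ k, |sg k * Complex.normSq (W k j)| :=
          Finset.abs_sum_le_sum_abs _ _
      _ = ∑ k, Complex.normSq (W k j) := by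
          apply Finset.sum_congr rfl
          intro k _
          rw [abs_mul, abs_of_nonneg (Complex.normSq_nonneg _)]
          have : |sg k| = 1 := by rw [hsg]; by_cases h : 0 ≤ lam k <;> simp [h]
          rw [this, one_mul]
      _ = 1 := hWnorm j
  have upper : (((P - Q) * S).trace).re ≤ ∑ j, |mu j| := by
    have e : ((P - Q) * S).trace = ∑ j, (mu j : ℂ) * T j j := by
      rw [← PS_trace_conj V hVV' ((P - Q) * S),
        ← PS_conj_mul_conj V hVV' (P - Q) S]
      have hRV : star V * (P - Q) * V = diagonal (Complex.ofReal ∘ mu) :=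
        (Unitary.conjStarAlgAut_star_apply _ _).symm.trans hR.conjStarAlgAut_star_eigenvectorUnitary
      rw [hRV, ← hTdef, Matrix.trace]
      congr 1; funext j
      simp [Matrix.diag_apply, Matrix.diagonal_mul]
    rw [e, Complex.re_sum]
    apply Finset.sum_le_sum
    intro j _
    rw [Complex.re_ofReal_mul]
    calc mu j * (T j j).re ≤ |mu j * (T j j).re| := le_abs_self _
      _ = |mu j| * |(T j j).re| := abs_mul _ _
      _ ≤ |mu j| * 1 := mul_le_mul_of_nonneg_left (hTjj j) (abs_nonneg _)
      _ = |mu j| := mul_one _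
  rw [ge_iff_le, hsA, traceNormR]
  exact le_trans lower upper
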